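/- Let D be a division ring and let σ, τ be involutions on D. Then every nonzero τ-symmetric element a ∈ D* can be written a = (a·σ(a))·σ(a⁻¹), where a·σ(a) is σ-symmetric and σ(a⁻¹) is (στσ⁻¹)-symmetric. Hence S_τ* ⊆ S_σ* · S_{στσ⁻¹}* and Σ_τ ⊆ Σ_σ · Σ_{στσ⁻¹}. -/

import Mathlib

open Pointwise

section aux

variable {D : Type*} [DivisionRing D]

private lemma rho_one (ρ : D → D) (hmul : ∀ a b : D, ρ (a * b) = ρ b * ρ a)
    (h2 : ∀ a : D, ρ (ρ a) = a) : ρ 1 = 1 := by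
  have h : ρ 1 = ρ 1 * ρ 1 := by rw [← hmul, one_mul]
  by_cases h0 : ρ 1 = 0
  · have : (1 : D) = ρ 0 := by rw [← h0, h2]
    have h0' : ρ (0 : D) = ρ 0 * ρ 0 := by rw [← hmul, mul_zero]
    have hx : ∀ x : D, ρ x = 0 := by
      intro x
      have : ρ x = ρ 1 * ρ x := by rw [← hmul, mul_one]
      rw [h0, zero_mul] at this; exact this
    have := h2 1
    rw [hx (ρ 1)] at this
    exact absurd this.symm one_ne_zero
  · exact (mul_eq_left₀ h0).mp h.symm

/-- A unit whose value is `ρ` of a unit. -/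
private def rhoUnit (ρ : D → D) (hmul : ∀ a b : D, ρ (a * b) = ρ b * ρ a)
    (h2 : ∀ a : D, ρ (ρ a) = a) (g : Dˣ) : Dˣ where
  val := ρ (g : D)
  inv := ρ ((g⁻¹ : Dˣ) : D)
  val_inv := by rw [← hmul]; simp [rho_one ρ hmul h2]
  inv_val := by rw [← hmul]; simp [rho_one ρ hmul h2]

private lemma closure_normal (ρ : D → D) (hmul : ∀ a b : D, ρ (a * b) = ρ b * ρ a)
    (h2 : ∀ a : D, ρ (ρ a) = a) :
    (Subgroup.closure {u : Dˣ | ρ (u : D) = (u : D)}).Normal := by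
  set S : Set Dˣ := {u : Dˣ | ρ (u : D) = (u : D)} with hS
  constructor
  intro n hn g
  have key : ∀ s ∈ S, g * s * g⁻¹ ∈ Subgroup.closure S := by
    intro s hs
    set gr := rhoUnit ρ hmul h2 g with hgr
    have h1 : g * s * gr ∈ S := by
      show ρ ((g : D) * (s : D) * (gr : D)) = (g : D) * (s : D) * (gr : D)
      have hgrv : (gr : D) = ρ (g : D) := rfl
      rw [hgrv, hmul, hmul, h2, hs, mul_assoc]
    have h2' : g * gr ∈ S := by
      show ρ ((g : D) * (gr : D)) = (g : D) * (gr : D)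
      have hgrv : (gr : D) = ρ (g : D) := rfl
      rw [hgrv, hmul, h2]
    have heq : g * s * g⁻¹ = (g * s * gr) * (g * gr)⁻¹ := by
      rw [mul_inv_rev]
      group
    rw [heq]
    exact Subgroup.mul_mem _ (Subgroup.subset_closure h1)
      (Subgroup.inv_mem _ (Subgroup.subset_closure h2'))
  induction hn using Subgroup.closure_induction'' with
  | one => simpa using Subgroup.one_mem _
  | mem s hs => exact key s hs
  | inv_mem s hs =>
      have : g * s⁻¹ * g⁻¹ = (g * s * g⁻¹)⁻¹ := by group
      rw [this]
      exact Subgroup.inv_mem _ (key s hs)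
  | mul s t _ _ ihs iht =>
      have : g * (s * t) * g⁻¹ = (g * s * g⁻¹) * (g * t * g⁻¹) := by group
      rw [this]
      exact Subgroup.mul_mem _ ihs iht

end aux

/-- Lemma 4.4(ii) of Hazrat–Wadsworth: if `σ, τ` are involutions on a division
ring `D`, every nonzero `τ`-symmetric `a` factors as `a = (a·σ(a))·σ(a⁻¹)` with
`a·σ(a)` being `σ`-symmetric and `σ(a⁻¹)` being `στσ⁻¹`-symmetric (here
`σ⁻¹ = σ`); hence `S_τ* ⊆ S_σ* · S_{στσ}*` and `Σ_τ ⊆ Σ_σ · Σ_{στσ}`. -/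
theorem stmt5 {D : Type*} [DivisionRing D] (σ τ : D → D)
    (hσadd : ∀ a b : D, σ (a + b) = σ a + σ b)
    (hσmul : ∀ a b : D, σ (a * b) = σ b * σ a)
    (hσ2 : ∀ a : D, σ (σ a) = a)
    (hτadd : ∀ a b : D, τ (a + b) = τ a + τ b)
    (hτmul : ∀ a b : D, τ (a * b) = τ b * τ a)
    (hτ2 : ∀ a : D, τ (τ a) = a) :
    (∀ a : Dˣ, τ (a : D) = (a : D) →
      σ ((a : D) * σ (a : D)) = (a : D) * σ (a : D) ∧
      σ (τ (σ (σ ((a : D)⁻¹)))) = σ ((a : D)⁻¹) ∧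
      (a : D) = ((a : D) * σ (a : D)) * σ ((a : D)⁻¹)) ∧
    {u : Dˣ | τ (u : D) = (u : D)} ⊆
      {u : Dˣ | σ (u : D) = (u : D)} * {u : Dˣ | σ (τ (σ (u : D))) = (u : D)} ∧
    (Subgroup.closure {u : Dˣ | τ (u : D) = (u : D)} : Set Dˣ) ⊆
      (Subgroup.closure {u : Dˣ | σ (u : D) = (u : D)} : Set Dˣ) *
      (Subgroup.closure {u : Dˣ | σ (τ (σ (u : D))) = (u : D)} : Set Dˣ) := by
  have hσ1 : σ 1 = 1 := rho_one σ hσmul hσ2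
  have hτ1 : τ 1 = 1 := rho_one τ hτmul hτ2
  have hτinv : ∀ a : Dˣ, τ (a : D) = (a : D) → τ ((a : D)⁻¹) = (a : D)⁻¹ := by
    intro a ha
    have h : τ ((a : D)⁻¹) * τ (a : D) = 1 := by
      rw [← hτmul]
      simp [hτ1]
    rw [ha] at h
    exact eq_inv_of_mul_eq_one_left h
  have part1 : ∀ a : Dˣ, τ (a : D) = (a : D) →
      σ ((a : D) * σ (a : D)) = (a : D) * σ (a : D) ∧
      σ (τ (σ (σ ((a : D)⁻¹)))) = σ ((a : D)⁻¹) ∧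
      (a : D) = ((a : D) * σ (a : D)) * σ ((a : D)⁻¹) := by
    intro a ha
    refine ⟨?_, ?_, ?_⟩
    · rw [hσmul, hσ2]
    · rw [hσ2, hτinv a ha]
    · have h : σ (a : D) * σ ((a : D)⁻¹) = 1 := by
        rw [← hσmul]
        simp [hσ1]
      rw [mul_assoc, h, mul_one]
  have part2 : {u : Dˣ | τ (u : D) = (u : D)} ⊆
      {u : Dˣ | σ (u : D) = (u : D)} * {u : Dˣ | σ (τ (σ (u : D))) = (u : D)} := by
    intro u hu
    set gr := rhoUnit σ hσmul hσ2 u with hgr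
    refine Set.mem_mul.mpr ⟨u * gr, ?_, gr⁻¹, ?_, by group⟩
    · show σ ((u : D) * (gr : D)) = (u : D) * (gr : D)
      have hgrv : (gr : D) = σ (u : D) := rfl
      rw [hgrv, hσmul, hσ2]
    · show σ (τ (σ ((gr⁻¹ : Dˣ) : D))) = ((gr⁻¹ : Dˣ) : D)
      have hgrv : ((gr⁻¹ : Dˣ) : D) = σ ((u : D)⁻¹) := by
        simp [hgr, rhoUnit]
      rw [hgrv, hσ2, hτinv u hu]
  refine ⟨part1, part2, ?_⟩
  · -- closures
    have hρmul : ∀ a b : D, σ (τ (σ (a * b))) = σ (τ (σ b)) * σ (τ (σ a)) := by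
      intro a b
      rw [hσmul, hτmul, hσmul]
    have hρ2 : ∀ a : D, σ (τ (σ (σ (τ (σ a))))) = a := by
      intro a
      rw [hσ2, hτ2, hσ2]
    have hKnormal : (Subgroup.closure {u : Dˣ | σ (τ (σ (u : D))) = (u : D)}).Normal :=
      closure_normal (fun x => σ (τ (σ x))) hρmul hρ2
    rw [← Subgroup.mul_normal]
    have hle : Subgroup.closure {u : Dˣ | τ (u : D) = (u : D)} ≤
        Subgroup.closure {u : Dˣ | σ (u : D) = (u : D)} ⊔
        Subgroup.closure {u : Dˣ | σ (τ (σ (u : D))) = (u : D)} := by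
      apply Subgroup.closure_le _ |>.mpr
      intro u hu
      rw [SetLike.mem_coe, ← SetLike.mem_coe, Subgroup.mul_normal]
      exact Set.mul_subset_mul Subgroup.subset_closure Subgroup.subset_closure (part2 hu)
    exact fun x hx => hle hx
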